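/- Every down-left graph G(m,n,a,b) is well-covered: all of its maximal independent sets have the same cardinality. -/

import Mathlib

/-- The graph `G(m,n)`: vertices are pairs `(i,j)` (0-indexed, corresponding to
`x_{i+1,j+1}`), and `x_{i,j} ~ x_{k,l}` iff (`i < k` and `j > l`) or (`i > k` and `j < l`). -/
def gridGraph (m n : ℕ) : SimpleGraph (Fin m × Fin n) where
  Adj u v := (u.1 < v.1 ∧ v.2 < u.2) ∨ (v.1 < u.1 ∧ u.2 < v.2)
  symm := ⟨fun u v h => Or.symm h⟩
  loopless := ⟨fun u h => by rcases h with ⟨h, -⟩ | ⟨h, -⟩ <;> exact absurd h (lt_irrefl _)⟩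

/-- `W` is an independent set of the induced subgraph of `G` on `A`. -/
def IndepOn {V : Type*} (G : SimpleGraph V) (A W : Set V) : Prop :=
  W ⊆ A ∧ ∀ u ∈ W, ∀ v ∈ W, ¬ G.Adj u v

/-- `W` is a maximal independent set of the induced subgraph of `G` on `A`. -/
def MaxIndepOn {V : Type*} (G : SimpleGraph V) (A W : Set V) : Prop :=
  IndepOn G A W ∧ ∀ W', IndepOn G A W' → W ⊆ W' → W' = W

theorem keyCount (m n : ℕ) (hm : 1 ≤ m) (hmn : m ≤ n)
    (a b : ℕ → ℕ)
    (ha1 : a 1 = 0)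
    (hamono : ∀ i, 1 ≤ i → i < m → a i ≤ a (i + 1))
    (ham : a m < n)
    (hb1 : 1 < b 1)
    (hbmono : ∀ i, 1 ≤ i → i < m → b i ≤ b (i + 1))
    (hbm : b m = n + 1)
    (A : Set (Fin m × Fin n))
    (hA : A = {p : Fin m × Fin n |
      a (p.1.1 + 1) < p.2.1 + 1 ∧ p.2.1 + 1 < b (p.1.1 + 1)})
    (W : Set (Fin m × Fin n))
    (hW : MaxIndepOn (gridGraph m n) A W) :
    W.ncard = ({j : ℕ | j < n ∧ ∃ i < m, a (i+1) ≤ j ∧ j + 2 ≤ b (i+1)} : Set ℕ).ncard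
      + ({i : ℕ | i < m ∧ a (i+1) + 2 ≤ b (i+1) ∧ ∃ i' < m, i < i' ∧
            a (i'+1) + 2 ≤ b (i'+1) ∧
            (∀ k, i < k → k < i' → ¬ (a (k+1) + 2 ≤ b (k+1))) ∧
            a (i'+1) + 2 ≤ b (i+1)} : Set ℕ).ncard := by
  classical
  -- monotonicity
  have mono_a : ∀ i k, 1 ≤ i → i ≤ k → k ≤ m → a i ≤ a k := by
    intro i k h1
    induction k with
    | zero => intro hik _; omega
    | succ k ih =>
      intro hik hkm
      rcases Nat.lt_or_ge i (k+1) with h | h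
      · exact le_trans (ih (by omega) (by omega)) (hamono k (by omega) (by omega))
      · have : i = k + 1 := by omega
        rw [this]
  have mono_b : ∀ i k, 1 ≤ i → i ≤ k → k ≤ m → b i ≤ b k := by
    intro i k h1
    induction k with
    | zero => intro hik _; omega
    | succ k ih =>
      intro hik hkm
      rcases Nat.lt_or_ge i (k+1) with h | h
      · exact le_trans (ih (by omega) (by omega)) (hbmono k (by omega) (by omega))
      · have : i = k + 1 := by omega
        rw [this]
  -- basic facts about W
  have inA : ∀ p : Fin m × Fin n, p ∈ W →
      a (p.1.1 + 1) < p.2.1 + 1 ∧ p.2.1 + 1 < b (p.1.1 + 1) := by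
    intro p hp
    have := hW.1.1 hp
    rw [hA] at this
    exact this
  have chain : ∀ p ∈ W, ∀ q ∈ W, p.1.1 < q.1.1 → p.2.1 ≤ q.2.1 := by
    intro p hp q hq hpq
    by_contra h
    exact hW.1.2 p hp q hq (Or.inl ⟨Fin.lt_def.mpr hpq, Fin.lt_def.mpr (by omega)⟩)
  have memActive : ∀ p : Fin m × Fin n, p ∈ W → a (p.1.1 + 1) + 2 ≤ b (p.1.1 + 1) := by
    intro p hp
    have := inA p hp
    omega
  have sat : ∀ p : Fin m × Fin n, p ∈ A → (∀ w ∈ W, ¬ (gridGraph m n).Adj p w) → p ∈ W := by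
    intro p hpA hnon
    have hind : IndepOn (gridGraph m n) A (insert p W) := by
      constructor
      · intro x hx
        rcases hx with rfl | hx
        · exact hpA
        · exact hW.1.1 hx
      · intro u hu v hv
        rcases hu with rfl | hu <;> rcases hv with rfl | hv
        · exact (gridGraph m n).loopless.irrefl _
        · exact hnon v hv
        · intro h; exact hnon u hu ((gridGraph m n).adj_symm h)
        · exact hW.1.2 u hu v hv
    have := hW.2 _ hind (Set.subset_insert _ _)
    rw [← this]
    exact Set.mem_insert _ _
  -- convenient form of sat for explicit row/column
  have sat' : ∀ (i : Fin m) (j : Fin n),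
      a (i.1 + 1) < j.1 + 1 → j.1 + 1 < b (i.1 + 1) →
      (∀ k : Fin m, ∀ l : Fin n, (k, l) ∈ W →
        ¬ ((i.1 < k.1 ∧ l.1 < j.1) ∨ (k.1 < i.1 ∧ j.1 < l.1))) →
      (i, j) ∈ W := by
    intro i j h1 h2 hnon
    apply sat
    · rw [hA]; exact ⟨h1, h2⟩
    · rintro ⟨k, l⟩ hw hadj
      refine hnon k l hw ?_
      rcases hadj with ⟨hx, hy⟩ | ⟨hx, hy⟩
      · exact Or.inl ⟨Fin.lt_def.mp hx, Fin.lt_def.mp hy⟩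
      · exact Or.inr ⟨Fin.lt_def.mp hx, Fin.lt_def.mp hy⟩
  -- every active row is used
  have rowNonempty : ∀ i : Fin m, a (i.1+1) + 2 ≤ b (i.1+1) → ∃ j : Fin n, (i, j) ∈ W := by
    intro i hact
    have him : i.1 < m := i.isLt
    set D : ℕ := (Finset.univ.filter
      (fun p : Fin m × Fin n => p ∈ W ∧ p.1 < i)).sup (fun p => p.2.1 + 1) with hD
    have hDlt : D < b (i.1+1) := by
      have hbpos : (⊥ : ℕ) < b (i.1+1) := by
        show 0 < b (i.1+1)
        omega
      rw [hD]
      apply Finset.sup_lt_iff hbpos |>.mpr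
      intro p hp
      rw [Finset.mem_filter] at hp
      have h1 := inA p hp.2.1
      have hpi : p.1.1 < i.1 := Fin.lt_def.mp hp.2.2
      have h2 : b (p.1.1+1) ≤ b (i.1+1) := mono_b _ _ (by omega) (by omega) (by omega)
      omega
    have hbn : b (i.1+1) ≤ n + 1 := by
      have := mono_b (i.1+1) m (by omega) (by omega) le_rfl
      omega
    set j1 : ℕ := max (a (i.1+1) + 1) D with hj1
    have hj1a : a (i.1+1) + 1 ≤ j1 := le_max_left _ _
    have hj1D : D ≤ j1 := le_max_right _ _
    have hj1b : j1 < b (i.1+1) := by omega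
    have hj1n : j1 - 1 < n := by omega
    have hj1pos : 1 ≤ j1 := by omega
    refine ⟨⟨j1 - 1, hj1n⟩, ?_⟩
    apply sat' i ⟨j1 - 1, hj1n⟩ (by simp only [Fin.val_mk]; omega)
      (by simp only [Fin.val_mk]; omega)
    intro k l hw hadj
    simp only [Fin.val_mk] at hadj
    rcases hadj with ⟨h1, h2⟩ | ⟨h1, h2⟩
    · -- i < k, l < j1-1 : need j1 ≤ l + 1
      have hal : a (k.1 + 1) < l.1 + 1 ∧ l.1 + 1 < b (k.1 + 1) := inA (k, l) hw
      have hkm : k.1 < m := k.isLt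
      have ha2 : a (i.1+1) ≤ a (k.1+1) := mono_a _ _ (by omega) (by omega) (by omega)
      have hDle : D ≤ l.1 + 1 := by
        rw [hD]
        apply Finset.sup_le
        intro p hp
        rw [Finset.mem_filter] at hp
        have hpi : p.1.1 < i.1 := Fin.lt_def.mp hp.2.2
        have hcc : p.2.1 ≤ l.1 := chain p hp.2.1 (k, l) hw (by show p.1.1 < k.1; omega)
        omega
      omega
    · -- k < i, j1 - 1 < l : but l + 1 ≤ D ≤ j1
      have hDge : l.1 + 1 ≤ D := by
        rw [hD]
        have hmem : ((k, l) : Fin m × Fin n) ∈ Finset.univ.filter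
            (fun p : Fin m × Fin n => p ∈ W ∧ p.1 < i) :=
          Finset.mem_filter.mpr ⟨Finset.mem_univ _, hw, Fin.lt_def.mpr h1⟩
        exact Finset.le_sup (f := fun p : Fin m × Fin n => p.2.1 + 1) hmem
      omega
  -- every active column is used
  have colNonempty : ∀ j : Fin n,
      (∃ i : Fin m, a (i.1+1) ≤ j.1 ∧ j.1 + 2 ≤ b (i.1+1)) → ∃ i : Fin m, (i, j) ∈ W := by
    intro j hj
    obtain ⟨i0, hi0a, hi0b⟩ := hj
    set Q : Finset (Fin m) := Finset.univ.filter
      (fun i : Fin m => a (i.1+1) ≤ j.1 ∧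
        ∀ p : Fin m × Fin n, p ∈ W → p.1.1 < i.1 → p.2.1 ≤ j.1) with hQ
    have hQ0 : (⟨0, by omega⟩ : Fin m) ∈ Q := by
      rw [hQ, Finset.mem_filter]
      refine ⟨Finset.mem_univ _, by simpa using (by omega : a 1 ≤ j.1), ?_⟩
      intro p hp hlt
      simp only [Fin.val_mk] at hlt
      omega
    have hQne : Q.Nonempty := Exists.intro _ hQ0
    obtain ⟨istar, histarQ, histarub⟩ : ∃ x ∈ Q, ∀ y ∈ Q, y ≤ x :=
      ⟨Q.max' hQne, Q.max'_mem hQne, fun y hy => Q.le_max' y hy⟩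
    rw [hQ, Finset.mem_filter] at histarQ
    obtain ⟨-, haistar, hbelow⟩ := histarQ
    have him : istar.1 < m := istar.isLt
    -- step 1
    have step1 : ∀ p : Fin m × Fin n, p ∈ W → istar.1 < p.1.1 → j.1 ≤ p.2.1 := by
      intro p hp hlt
      by_contra h
      have hmem2 : p.1 ∈ Q := by
        rw [hQ, Finset.mem_filter]
        refine ⟨Finset.mem_univ _, ?_, ?_⟩
        · have := inA p hp; omega
        · intro q hq hql
          have hqc : q.2.1 ≤ p.2.1 := chain q hq p hp hql
          omega
      have := histarub _ hmem2
      have := Fin.le_def.mp this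
      omega
    -- step 2
    have step2 : j.1 + 2 ≤ b (istar.1 + 1) := by
      by_contra h
      have hi0m : i0.1 < m := i0.isLt
      have histari0 : istar.1 < i0.1 := by
        by_contra hc
        have := mono_b (i0.1+1) (istar.1+1) (by omega) (by omega) (by omega)
        omega
      have hsucc : (⟨istar.1+1, by omega⟩ : Fin m) ∈ Q := by
        rw [hQ, Finset.mem_filter]
        refine ⟨Finset.mem_univ _, ?_, ?_⟩
        · simp only [Fin.val_mk]
          have := mono_a (istar.1+1+1) (i0.1+1) (by omega) (by omega) (by omega)
          omega
        · intro p hp hlt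
          simp only [Fin.val_mk] at hlt
          rcases Nat.lt_or_ge p.1.1 istar.1 with h' | h'
          · exact hbelow p hp h'
          · have hpe : p.1.1 = istar.1 := by omega
            have hb' := inA p hp
            rw [hpe] at hb'
            omega
      have := histarub _ hsucc
      have := Fin.le_def.mp this
      simp only [Fin.val_mk] at this
      omega
    refine ⟨istar, ?_⟩
    apply sat' istar j (by omega) (by omega)
    intro k l hw hadj
    rcases hadj with ⟨h1, h2⟩ | ⟨h1, h2⟩
    · have h3 : j.1 ≤ l.1 := step1 (k, l) hw h1
      omega
    · have h3 : l.1 ≤ j.1 := hbelow (k, l) hw h1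
      omega
  -- consecutive active rows with overlapping intervals share a column
  have share : ∀ i i' : Fin m, i.1 < i'.1 →
      a (i.1+1) + 2 ≤ b (i.1+1) → a (i'.1+1) + 2 ≤ b (i'.1+1) →
      (∀ k : Fin m, i.1 < k.1 → k.1 < i'.1 → ¬ (a (k.1+1) + 2 ≤ b (k.1+1))) →
      a (i'.1+1) + 2 ≤ b (i.1+1) →
      ∃ jf : Fin n, (i, jf) ∈ W ∧ (i', jf) ∈ W := by
    intro i i' hii' hacti hacti' hbet hov
    have him : i.1 < m := i.isLt
    have hi'm : i'.1 < m := i'.isLt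
    obtain ⟨d0, hd0⟩ := rowNonempty i hacti
    obtain ⟨c0, hc0⟩ := rowNonempty i' hacti'
    set Ri : Finset (Fin n) := Finset.univ.filter (fun l => (i, l) ∈ W) with hRi
    set Ri' : Finset (Fin n) := Finset.univ.filter (fun l => (i', l) ∈ W) with hRi'
    have hRine : Ri.Nonempty :=
      ⟨d0, by rw [hRi, Finset.mem_filter]; exact ⟨Finset.mem_univ _, hd0⟩⟩
    have hRi'ne : Ri'.Nonempty :=
      ⟨c0, by rw [hRi', Finset.mem_filter]; exact ⟨Finset.mem_univ _, hc0⟩⟩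
    obtain ⟨d, hdQ, hdub⟩ : ∃ x ∈ Ri, ∀ y ∈ Ri, y ≤ x :=
      ⟨Ri.max' hRine, Ri.max'_mem hRine, fun y hy => Ri.le_max' y hy⟩
    obtain ⟨c, hcQ, hclb⟩ : ∃ x ∈ Ri', ∀ y ∈ Ri', x ≤ y :=
      ⟨Ri'.min' hRi'ne, Ri'.min'_mem hRi'ne, fun y hy => Ri'.min'_le y hy⟩
    rw [hRi, Finset.mem_filter] at hdQ
    rw [hRi', Finset.mem_filter] at hcQ
    have hdW : (i, d) ∈ W := hdQ.2
    have hcW : (i', c) ∈ W := hcQ.2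
    have hdc : d.1 ≤ c.1 := chain (i, d) hdW (i', c) hcW hii'
    have hnobet : ∀ p : Fin m × Fin n, p ∈ W → i.1 < p.1.1 → p.1.1 < i'.1 → False := by
      intro p hp h1 h2
      exact hbet p.1 h1 h2 (memActive p hp)
    rcases Nat.lt_or_ge d.1 (a (i'.1+1)) with hcase | hcase
    · -- impossible: (i, a(i'+1)) would be addable and exceed the max
      exfalso
      have hjn : a (i'.1+1) < n := by
        have := mono_b (i.1+1) m (by omega) (by omega) le_rfl
        omega
      have hmemW : (i, (⟨a (i'.1+1), hjn⟩ : Fin n)) ∈ W := by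
        apply sat' i ⟨a (i'.1+1), hjn⟩
        · simp only [Fin.val_mk]
          have := mono_a (i.1+1) (i'.1+1) (by omega) (by omega) (by omega)
          omega
        · simp only [Fin.val_mk]; omega
        · intro k l hw hadj
          simp only [Fin.val_mk] at hadj
          have hkm : k.1 < m := k.isLt
          rcases hadj with ⟨h1, h2⟩ | ⟨h1, h2⟩
          · have hk : i'.1 ≤ k.1 := by
              by_contra hk
              exact hnobet (k, l) hw h1 (by show k.1 < i'.1; omega)
            have hia : a (k.1 + 1) < l.1 + 1 ∧ l.1 + 1 < b (k.1 + 1) := inA (k, l) hw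
            have := mono_a (i'.1+1) (k.1+1) (by omega) (by omega) (by omega)
            omega
          · have hcc : l.1 ≤ d.1 := chain (k, l) hw (i, d) hdW h1
            omega
      have : (⟨a (i'.1+1), hjn⟩ : Fin n) ∈ Ri := by
        rw [hRi, Finset.mem_filter]; exact ⟨Finset.mem_univ _, hmemW⟩
      have := Fin.le_def.mp (hdub _ this)
      simp only [Fin.val_mk] at this
      omega
    · -- a(i'+1) ≤ d : then (i', d) ∈ W, column d is shared
      refine ⟨d, hdW, ?_⟩
      have hc2 : a (i'.1 + 1) < c.1 + 1 ∧ c.1 + 1 < b (i'.1 + 1) := inA (i', c) hcW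
      apply sat' i' d (by omega) (by omega)
      intro k l hw hadj
      rcases hadj with ⟨h1, h2⟩ | ⟨h1, h2⟩
      · have hcc : c.1 ≤ l.1 := chain (i', c) hcW (k, l) hw h1
        omega
      · have hk : k.1 ≤ i.1 := by
          by_contra hk
          exact hnobet (k, l) hw (by show i.1 < k.1; omega) h1
        have hld : l.1 ≤ d.1 := by
          rcases Nat.lt_or_ge k.1 i.1 with h' | h'
          · exact chain (k, l) hw (i, d) hdW h'
          · have hke : k = i := Fin.ext (by omega)
            subst hke
            have : l ∈ Ri := by
              rw [hRi, Finset.mem_filter]; exact ⟨Finset.mem_univ _, hw⟩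
            exact Fin.le_def.mp (hdub _ this)
        omega
  -- split W into column-minimal vertices and the rest
  set Wmin : Set (Fin m × Fin n) :=
    {p | p ∈ W ∧ ∀ k : Fin m, k.1 < p.1.1 → (k, p.2) ∉ W} with hWmin
  set Wrest : Set (Fin m × Fin n) :=
    {p | p ∈ W ∧ ∃ k : Fin m, k.1 < p.1.1 ∧ (k, p.2) ∈ W} with hWrest
  have hsplit : W = Wmin ∪ Wrest := by
    ext p
    constructor
    · intro hp
      by_cases h : ∃ k : Fin m, k.1 < p.1.1 ∧ (k, p.2) ∈ W
      · exact Or.inr ⟨hp, h⟩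
      · push_neg at h
        exact Or.inl ⟨hp, h⟩
    · rintro (hp | hp) <;> exact hp.1
  have hdisj : Disjoint Wmin Wrest := by
    rw [Set.disjoint_left]
    rintro p ⟨hpW, hmin⟩ ⟨-, k, hk1, hk2⟩
    exact hmin k hk1 hk2
  set predN : (Fin m × Fin n) → ℕ := fun p =>
    (Finset.univ.filter (fun k : Fin m => k.1 < p.1.1 ∧ (k, p.2) ∈ W)).sup
      (fun k => k.1) with hpredN
  have predUB : ∀ p : Fin m × Fin n, ∀ k : Fin m,
      k.1 < p.1.1 → (k, p.2) ∈ W → k.1 ≤ predN p := by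
    intro p k h1 h2
    rw [hpredN]
    exact Finset.le_sup (f := fun k : Fin m => k.1)
      (Finset.mem_filter.mpr ⟨Finset.mem_univ _, h1, h2⟩)
  have predSpec : ∀ p ∈ Wrest,
      ∃ cF : Fin m, cF.1 = predN p ∧ cF.1 < p.1.1 ∧ (cF, p.2) ∈ W := by
    intro p hp
    simp only [hWrest, Set.mem_setOf_eq] at hp
    obtain ⟨hpW, k0, hk01, hk02⟩ := hp
    have hne : (Finset.univ.filter
        (fun k : Fin m => k.1 < p.1.1 ∧ (k, p.2) ∈ W)).Nonempty :=
      Exists.intro k0 (Finset.mem_filter.mpr ⟨Finset.mem_univ _, hk01, hk02⟩)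
    obtain ⟨cF, hcFmem, hsup⟩ := Finset.exists_mem_eq_sup _ hne (fun k : Fin m => k.1)
    rw [Finset.mem_filter] at hcFmem
    exact ⟨cF, by rw [hpredN]; exact hsup.symm, hcFmem.2.1, hcFmem.2.2⟩
  have hbij1 : Set.BijOn (fun p : Fin m × Fin n => p.2.1) Wmin
      ({j : ℕ | j < n ∧ ∃ i < m, a (i+1) ≤ j ∧ j + 2 ≤ b (i+1)} : Set ℕ) := by
    refine ⟨?_, ?_, ?_⟩
    · intro p hp
      simp only [hWmin, Set.mem_setOf_eq] at hp
      have h1 := inA p hp.1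
      exact ⟨p.2.isLt, p.1.1, p.1.isLt, (show a (p.1.1+1) ≤ p.2.1 by omega),
        (show p.2.1 + 2 ≤ b (p.1.1+1) by omega)⟩
    · intro p hp q hq h
      simp only [hWmin, Set.mem_setOf_eq] at hp hq
      have hps : p.2 = q.2 := Fin.ext h
      rcases lt_trichotomy p.1.1 q.1.1 with hlt | heq | hgt
      · exfalso
        refine hq.2 p.1 hlt ?_
        rw [← hps]
        exact hp.1
      · exact Prod.ext_iff.mpr ⟨Fin.ext heq, hps⟩
      · exfalso
        refine hp.2 q.1 hgt ?_
        rw [hps]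
        exact hq.1
    · intro j hj
      obtain ⟨hjn, i0, hi0m, h1, h2⟩ := hj
      obtain ⟨i2, hi2⟩ := colNonempty ⟨j, hjn⟩ ⟨⟨i0, hi0m⟩, h1, h2⟩
      set Cj : Finset (Fin m) := Finset.univ.filter
        (fun i : Fin m => (i, (⟨j, hjn⟩ : Fin n)) ∈ W) with hCj
      have hCjne : Cj.Nonempty :=
        Exists.intro i2 (by rw [hCj, Finset.mem_filter]; exact ⟨Finset.mem_univ _, hi2⟩)
      obtain ⟨imin, hmem, hlb⟩ : ∃ x ∈ Cj, ∀ y ∈ Cj, x ≤ y :=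
        ⟨Cj.min' hCjne, Cj.min'_mem hCjne, fun y hy => Cj.min'_le y hy⟩
      rw [hCj, Finset.mem_filter] at hmem
      refine ⟨(imin, ⟨j, hjn⟩), ?_, rfl⟩
      simp only [hWmin, Set.mem_setOf_eq]
      refine ⟨hmem.2, ?_⟩
      intro k hk hkW
      have hky : imin ≤ k :=
        hlb k (by rw [hCj, Finset.mem_filter]; exact ⟨Finset.mem_univ _, hkW⟩)
      have h4 := Fin.le_def.mp hky
      have hk' : k.1 < imin.1 := hk
      omega
  have hbij2 : Set.BijOn predN Wrest
      ({i : ℕ | i < m ∧ a (i+1) + 2 ≤ b (i+1) ∧ ∃ i' < m, i < i' ∧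
            a (i'+1) + 2 ≤ b (i'+1) ∧
            (∀ k, i < k → k < i' → ¬ (a (k+1) + 2 ≤ b (k+1))) ∧
            a (i'+1) + 2 ≤ b (i+1)} : Set ℕ) := by
    refine ⟨?_, ?_, ?_⟩
    · intro p hp
      obtain ⟨cF, hc1, hc2, hc3⟩ := predSpec p hp
      simp only [hWrest, Set.mem_setOf_eq] at hp
      have hpW := hp.1
      have hact1 : a (cF.1+1) + 2 ≤ b (cF.1+1) := memActive (cF, p.2) hc3
      have hact2 : a (p.1.1+1) + 2 ≤ b (p.1.1+1) := memActive p hpW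
      have h8 : a (p.1.1+1) < p.2.1+1 ∧ p.2.1+1 < b (p.1.1+1) := inA p hpW
      have h9 : a (cF.1+1) < p.2.1+1 ∧ p.2.1+1 < b (cF.1+1) := inA (cF, p.2) hc3
      simp only [Set.mem_setOf_eq]
      rw [← hc1]
      refine ⟨cF.isLt, hact1, p.1.1, p.1.isLt, hc2, hact2, ?_, by omega⟩
      intro k hk1 hk2 hactk
      have hkm : k < m := by have := p.1.isLt; omega
      obtain ⟨l, hl⟩ := rowNonempty ⟨k, hkm⟩ hactk
      have h5 : p.2.1 ≤ l.1 := chain (cF, p.2) hc3 (⟨k, hkm⟩, l) hl hk1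
      have h6 : l.1 ≤ p.2.1 := chain (⟨k, hkm⟩, l) hl p hpW hk2
      have hlp : l = p.2 := Fin.ext (by omega)
      subst hlp
      have h7 : k ≤ predN p := predUB p ⟨k, hkm⟩ hk2 hl
      omega
    · intro p hp q hq h
      obtain ⟨cp, hcp1, hcp2, hcp3⟩ := predSpec p hp
      obtain ⟨cq, hcq1, hcq2, hcq3⟩ := predSpec q hq
      simp only [hWrest, Set.mem_setOf_eq] at hp hq
      have hcpq : cq = cp := Fin.ext (by rw [hcp1, hcq1]; exact h.symm)
      subst hcpq
      have h1 : p.2.1 ≤ q.2.1 := chain (cq, p.2) hcp3 q hq.1 hcq2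
      have h2 : q.2.1 ≤ p.2.1 := chain (cq, q.2) hcq3 p hp.1 hcp2
      have hps : p.2 = q.2 := Fin.ext (le_antisymm h1 h2)
      rcases lt_trichotomy p.1.1 q.1.1 with hlt | heq | hgt
      · exfalso
        have h3 : p.1.1 ≤ predN q := predUB q p.1 hlt (by rw [← hps]; exact hp.1)
        rw [← hcq1] at h3
        omega
      · exact Prod.ext_iff.mpr ⟨Fin.ext heq, hps⟩
      · exfalso
        have h3 : q.1.1 ≤ predN p := predUB p q.1 hgt (by rw [hps]; exact hq.1)
        rw [← hcp1] at h3
        omega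
    · intro i hi
      simp only [Set.mem_setOf_eq] at hi
      obtain ⟨him, hact, i', hi'm, hii', hact', hbet, hov⟩ := hi
      obtain ⟨jf, hij, hi'j⟩ := share ⟨i, him⟩ ⟨i', hi'm⟩ hii' hact hact'
        (fun k hk1 hk2 => hbet k.1 hk1 hk2) hov
      have hpmem : ((⟨i', hi'm⟩, jf) : Fin m × Fin n) ∈ Wrest := by
        simp only [hWrest, Set.mem_setOf_eq]
        exact ⟨hi'j, ⟨i, him⟩, hii', hij⟩
      refine ⟨(⟨i', hi'm⟩, jf), hpmem, ?_⟩
      have hle : i ≤ predN (⟨i', hi'm⟩, jf) := predUB _ ⟨i, him⟩ hii' hij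
      have hub : predN ((⟨i', hi'm⟩, jf) : Fin m × Fin n) ≤ i := by
        obtain ⟨cF, hc1, hc2, hc3⟩ := predSpec (⟨i', hi'm⟩, jf) hpmem
        have hcact : a (cF.1+1) + 2 ≤ b (cF.1+1) := memActive (cF, jf) hc3
        have hc2' : cF.1 < i' := hc2
        rcases Nat.lt_or_ge i cF.1 with h' | h'
        · exact absurd hcact (hbet cF.1 h' hc2')
        · omega
      omega
  calc W.ncard = (Wmin ∪ Wrest).ncard := by rw [← hsplit]
    _ = Wmin.ncard + Wrest.ncard :=
        Set.ncard_union_eq hdisj (Set.toFinite _) (Set.toFinite _)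
    _ = _ := by
        rw [← hbij1.image_eq, ← hbij2.image_eq,
          Set.ncard_image_of_injOn hbij1.injOn, Set.ncard_image_of_injOn hbij2.injOn]


/- Down-left graph setup (1-indexed data, 0-indexed vertices): `a`, `b` encode the
vectors `(a_1,…,a_m)`, `(b_1,…,b_m)` with `0 = a_1 ≤ … ≤ a_m < n`,
`1 < b_1 ≤ … ≤ b_m = n + 1`, `a_i < b_i` for `2 ≤ i ≤ m - 1`.  The down-left graph
`G(m,n,a,b)` is the induced subgraph of `G(m,n)` on the vertex set `A`, where the
vertex `x_{i,j}` (i.e. the pair `(i-1, j-1) : Fin m × Fin n`) is kept iff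
`a_i < j < b_i`. -/
/-- every down-left graph `G(m,n,a,b)` is well-covered. -/
theorem stmt8 (m n : ℕ) (hm : 1 ≤ m) (hmn : m ≤ n)
    (a b : ℕ → ℕ)
    (ha1 : a 1 = 0)
    (hamono : ∀ i, 1 ≤ i → i < m → a i ≤ a (i + 1))
    (ham : a m < n)
    (hb1 : 1 < b 1)
    (hbmono : ∀ i, 1 ≤ i → i < m → b i ≤ b (i + 1))
    (hbm : b m = n + 1)
    (hab : ∀ i, 2 ≤ i → i ≤ m - 1 → a i < b i)
    (A : Set (Fin m × Fin n))
    (hA : A = {p : Fin m × Fin n |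
      a (p.1.1 + 1) < p.2.1 + 1 ∧ p.2.1 + 1 < b (p.1.1 + 1)})
    (W W' : Set (Fin m × Fin n))
    (hW : MaxIndepOn (gridGraph m n) A W)
    (hW' : MaxIndepOn (gridGraph m n) A W') :
    W.ncard = W'.ncard := by
  rw [keyCount m n hm hmn a b ha1 hamono ham hb1 hbmono hbm A hA W hW,
    keyCount m n hm hmn a b ha1 hamono ham hb1 hbmono hbm A hA W' hW']
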